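/- Suppose λ^{r+1} − λ^r = ρ A z^{r+1} and G^r + Aᵀλ^{r+1} + ρ L⁺(z^{r+1} − z^r) = 0 hold for all r, where L⁺ is symmetric. If λ^{r+1} − λ^r lies in the column space of A with σ_min the smallest nonzero eigenvalue of AᵀA, then ‖λ^{r+1} − λ^r‖² ≤ (3/σ_min)(‖G^r − h^r‖² + ‖h^r − G^{r−1}‖² + ρ²‖L⁺ w^r‖²), where h^r is any vector and w^r := (z^{r+1} − z^r) − (z^r − z^{r−1}). -/

import Mathlib

open Matrix
open scoped RealInnerProductSpace

lemma ip_eq (n : ℕ) (u v : EuclideanSpace ℝ (Fin n)) : ⟪u, v⟫ = ∑ i, u i * v i := by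
  simp [PiLp.inner_apply, RCLike.inner_apply, mul_comm]

lemma key_eig (n : ℕ) (M : Matrix (Fin n) (Fin n) ℝ) (hM : M.IsHermitian)
    (σ : ℝ) (hσpos : 0 < σ)
    (hσ : ∀ μ : ℝ, μ ≠ 0 → (∃ x : Fin n → ℝ, x ≠ 0 ∧ M.mulVec x = μ • x) → σ ≤ μ)
    (x : Fin n → ℝ) :
    σ * (x ⬝ᵥ M.mulVec x) ≤ M.mulVec x ⬝ᵥ M.mulVec x := by
  have hMT : Mᵀ = M := by
    have := hM.eq
    simpa [conjTranspose_eq_transpose_of_trivial] using this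
  set B := hM.eigenvectorBasis with hB
  set μ := hM.eigenvalues with hμ
  -- symmetry of M in dotProduct form
  have hsymm : ∀ u v : Fin n → ℝ, M.mulVec u ⬝ᵥ v = u ⬝ᵥ M.mulVec v := by
    intro u v
    rw [dotProduct_mulVec, ← mulVec_transpose, hMT]
  have hBM : ∀ i, (⇑(B i) : Fin n → ℝ) ⬝ᵥ M.mulVec x = μ i * ((⇑(B i) : Fin n → ℝ) ⬝ᵥ x) := by
    intro i
    rw [← hsymm, hM.mulVec_eigenvectorBasis i]
    simp [smul_dotProduct]
    rfl
  -- Parseval-type expansions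
  set X : EuclideanSpace ℝ (Fin n) := WithLp.toLp 2 x with hX
  set Y : EuclideanSpace ℝ (Fin n) := WithLp.toLp 2 (M.mulVec x) with hY
  have e1 : x ⬝ᵥ M.mulVec x = ∑ i, ⟪X, B i⟫ * ⟪B i, Y⟫ := by
    rw [B.sum_inner_mul_inner X Y, ip_eq]
    rfl
  have e2 : M.mulVec x ⬝ᵥ M.mulVec x = ∑ i, ⟪Y, B i⟫ * ⟪B i, Y⟫ := by
    rw [B.sum_inner_mul_inner Y Y, ip_eq]
    rfl
  have hc : ∀ i, ⟪B i, Y⟫ = μ i * ⟪B i, X⟫ := by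
    intro i
    rw [ip_eq, ip_eq]
    exact hBM i
  rw [e1, e2, Finset.mul_sum]
  apply Finset.sum_le_sum
  intro i _
  rw [real_inner_comm (B i) X, real_inner_comm (B i) Y, hc i]
  rcases eq_or_ne (μ i) 0 with h0 | h0
  · simp [h0]
  · have hge : σ ≤ μ i := by
      apply hσ _ h0
      refine ⟨⇑(B i), ?_, hM.mulVec_eigenvectorBasis i⟩
      have := B.orthonormal.ne_zero i
      intro hcon
      apply this
      ext j
      exact congrFun hcon j
    have hpos : 0 < μ i := lt_of_lt_of_le hσpos hge
    nlinarith [sq_nonneg (⟪B i, X⟫)]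

/-- Bound on the dual successive difference of the primal-dual iteration. -/
theorem stmt_12 (m n : ℕ) (A : Matrix (Fin m) (Fin n) ℝ) (ρ : ℝ) (hρ : 0 < ρ)
    (Lplus : Matrix (Fin n) (Fin n) ℝ) (hsym : Lplus.IsSymm)
    (z : ℕ → Fin n → ℝ) (lam : ℕ → Fin m → ℝ) (G : ℕ → Fin n → ℝ)
    (hdual : ∀ r, lam (r + 1) - lam r = ρ • A.mulVec (z (r + 1)))
    (hprimal : ∀ r, G r + Aᵀ.mulVec (lam (r + 1))
      + ρ • Lplus.mulVec (z (r + 1) - z r) = 0)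
    (σmin : ℝ) (hσpos : 0 < σmin)
    (hσmin : ∀ μ : ℝ, μ ≠ 0 →
      (∃ x : Fin n → ℝ, x ≠ 0 ∧ (Aᵀ * A).mulVec x = μ • x) → σmin ≤ μ)
    (hrange : ∀ r, ∃ x : Fin n → ℝ, lam (r + 1) - lam r = A.mulVec x)
    (h : ℕ → Fin n → ℝ) (r : ℕ) (hr : 1 ≤ r) :
    ∑ i, (lam (r + 1) - lam r) i ^ 2 ≤ (3 / σmin) *
      ((∑ j, (G r - h r) j ^ 2) + (∑ j, (h r - G (r - 1)) j ^ 2)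
        + ρ ^ 2 * ∑ j, (Lplus.mulVec ((z (r + 1) - z r) - (z r - z (r - 1)))) j ^ 2) := by
  set v : Fin m → ℝ := lam (r + 1) - lam r with hv
  set w : Fin n → ℝ := (z (r + 1) - z r) - (z r - z (r - 1)) with hw
  obtain ⟨x, hx⟩ := hrange r
  set M : Matrix (Fin n) (Fin n) ℝ := Aᵀ * A with hMdef
  have hM : M.IsHermitian := by
    rw [hMdef]
    simpa [conjTranspose_eq_transpose_of_trivial] using isHermitian_conjTranspose_mul_self A
  -- M *ᵥ x = Aᵀ *ᵥ v
  have hMx : M.mulVec x = Aᵀ.mulVec v := by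
    rw [hv, hx, hMdef, ← mulVec_mulVec]
  -- ∑ v i ^2 = x ⬝ᵥ M *ᵥ x
  have hvv : ∑ i, v i ^ 2 = x ⬝ᵥ M.mulVec x := by
    rw [hMx]
    have : x ⬝ᵥ Aᵀ.mulVec v = A.mulVec x ⬝ᵥ v := by
      rw [dotProduct_mulVec, vecMul_transpose]
    rw [this, ← hx, ← hv]
    simp [dotProduct, sq]
  -- key spectral bound
  have hkey := key_eig n M hM σmin hσpos hσmin x
  -- components of Aᵀ v
  have hr1 : r - 1 + 1 = r := Nat.succ_pred_eq_of_pos hr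
  have hcoord : ∀ j, (Aᵀ.mulVec v) j
      = -((G r - h r) j + (h r - G (r - 1)) j + ρ * (Lplus.mulVec w) j) := by
    intro j
    have h1 := congrFun (hprimal r) j
    have h0 := congrFun (hprimal (r - 1)) j
    rw [hr1] at h0
    have hwj : (Lplus.mulVec w) j
        = (Lplus.mulVec (z (r + 1) - z r)) j - (Lplus.mulVec (z r - z (r - 1))) j := by
      rw [hw, mulVec_sub, Pi.sub_apply]
    have hvj : (Aᵀ.mulVec v) j
        = (Aᵀ.mulVec (lam (r + 1))) j - (Aᵀ.mulVec (lam r)) j := by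
      rw [hv, mulVec_sub, Pi.sub_apply]
    simp only [Pi.add_apply, Pi.sub_apply, Pi.smul_apply, Pi.zero_apply,
      smul_eq_mul] at h1 h0 ⊢
    rw [hvj]
    linear_combination h1 - h0 + ρ * hwj
  -- the 3-term bound
  have h3 : M.mulVec x ⬝ᵥ M.mulVec x ≤ 3 *
      ((∑ j, (G r - h r) j ^ 2) + (∑ j, (h r - G (r - 1)) j ^ 2)
        + ρ ^ 2 * ∑ j, (Lplus.mulVec w) j ^ 2) := by
    rw [hMx]
    have e : (Aᵀ.mulVec v) ⬝ᵥ (Aᵀ.mulVec v) = ∑ j, (Aᵀ.mulVec v) j ^ 2 := by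
      simp [dotProduct, sq]
    rw [e]
    have hterm : ∀ j, (Aᵀ.mulVec v) j ^ 2
        ≤ 3 * ((G r - h r) j ^ 2 + (h r - G (r - 1)) j ^ 2
          + ρ ^ 2 * (Lplus.mulVec w) j ^ 2) := by
      intro j
      rw [hcoord j]
      nlinarith [sq_nonneg ((G r - h r) j - (h r - G (r - 1)) j),
        sq_nonneg ((G r - h r) j - ρ * (Lplus.mulVec w) j),
        sq_nonneg ((h r - G (r - 1)) j - ρ * (Lplus.mulVec w) j)]
    calc ∑ j, (Aᵀ.mulVec v) j ^ 2
        ≤ ∑ j, 3 * ((G r - h r) j ^ 2 + (h r - G (r - 1)) j ^ 2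
          + ρ ^ 2 * (Lplus.mulVec w) j ^ 2) :=
          Finset.sum_le_sum fun j _ => hterm j
      _ = 3 * ((∑ j, (G r - h r) j ^ 2) + (∑ j, (h r - G (r - 1)) j ^ 2)
          + ρ ^ 2 * ∑ j, (Lplus.mulVec w) j ^ 2) := by
          rw [← Finset.mul_sum]
          congr 1
          rw [Finset.sum_add_distrib, Finset.sum_add_distrib, ← Finset.mul_sum]
  rw [hvv, div_mul_eq_mul_div, le_div_iff₀ hσpos, mul_comm]
  linarith [hkey, h3]
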